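/- Let E be a finite totally ordered set and d ≥ 1. Let χ be a chirotope of rank d on E and I an initial datum. Then D̃(χ,I) is nonempty if and only if I is compatible with χ, i.e., (a) there exists a tropical Plücker vector φ with underlying matroid |χ| and I_φ = I, and (b) for every pair (X,Y) ∈ binom(E,d+1) × binom(E,d−1), listed in increasing order, with s_k = (−1)^k χ(x₁,…,x̂_k,…,x_{d+1})χ(x_k,y₁,…,y_{d−1}), either all s_k are zero, or there exist indices k₊ and k₋ with x_{k₊}, x_{k₋} ∈ I(X,Y), s_{k₊} = +1 and s_{k₋} = −1. -/
import Mathlib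


open Finset

noncomputable section

/-! ### Alternating functions and oriented tropical Plücker vectors -/

/-- A function `Φ : E^d → ℝ` is alternating. -/
def IsAlternating {E : Type*} {d : ℕ} (Φ : (Fin d → E) → ℝ) : Prop :=
  (∀ (σ : Equiv.Perm (Fin d)) (x : Fin d → E),
      Φ (x ∘ σ) = ((Equiv.Perm.sign σ : ℤ) : ℝ) * Φ x) ∧
  ∀ x : Fin d → E, ¬ Function.Injective x → Φ x = 0

/-- The `i`-th term `(-1)^i · Φ(x₁,…,x̂ᵢ,…,x_{d+1}) · Φ(xᵢ,y₁,…,y_{d-1})` of the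
oriented (tropical) Plücker relation attached to tuples `X ∈ E^{d+1}`, `Y ∈ E^{d-1}`. -/
def delTerm {E : Type*} {d n : ℕ} (hn : d = n + 1) (Φ : (Fin d → E) → ℝ)
    (X : Fin (d + 1) → E) (Y : Fin n → E) (i : Fin (d + 1)) : ℝ :=
  (-1 : ℝ) ^ (i : ℕ) * Φ (X ∘ i.succAbove) * Φ (Fin.cons (X i) Y ∘ Fin.cast hn)

/-- `Φ : E^d → ℝ` is an oriented tropical Plücker vector of rank `d` on `E`:
it is alternating, not identically zero, and for every `X ∈ E^{d+1}`, `Y ∈ E^{d-1}`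
the list of terms of the Plücker relation is identically zero or its maximum absolute
value is attained both at a positive entry and at a negative entry. -/
def IsOrientedTP {E : Type*} (d : ℕ) (Φ : (Fin d → E) → ℝ) : Prop :=
  IsAlternating Φ ∧ (∃ x, Φ x ≠ 0) ∧
  ∀ (n : ℕ) (hn : d = n + 1) (X : Fin (d + 1) → E) (Y : Fin n → E),
    (∀ i, delTerm hn Φ X Y i = 0) ∨
    ∃ ip im : Fin (d + 1),
      0 < delTerm hn Φ X Y ip ∧ delTerm hn Φ X Y im < 0 ∧
      (∀ k, |delTerm hn Φ X Y k| ≤ delTerm hn Φ X Y ip) ∧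
      ∀ k, |delTerm hn Φ X Y k| ≤ -delTerm hn Φ X Y im

/-- `M̃(d,E)`: the space of oriented tropical Plücker vectors of rank `d` on `E`,
as a subset of `ℝ^{E^d}`. -/
def Mt (d : ℕ) (E : Type*) : Set ((Fin d → E) → ℝ) := {Φ | IsOrientedTP d Φ}

open Classical in
/-- Pushforward of `Φ : E^d → ℝ` along an (injective) map `α : E → F`. -/
noncomputable def pushforward {E F : Type*} {d : ℕ} (α : E → F) (Φ : (Fin d → E) → ℝ) :
    (Fin d → F) → ℝ :=
  fun y => if h : ∃ x : Fin d → E, ∀ i, y i = α (x i) then Φ h.choose else 0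

/-! ### Finsets, ordered tuples, evaluation -/

/-- The increasing enumeration of a `d`-element finite subset of a linearly ordered set. -/
def finsetTuple {E : Type*} [LinearOrder E] {d : ℕ} (B : Finset E) (h : B.card = d) :
    Fin d → E :=
  fun i => (B.orderIsoOfFin h i : E)

/-- Evaluation of an alternating function on a finite set, via its increasing enumeration
(and `0` if the set does not have the right cardinality). -/
noncomputable def evalOn {E : Type*} [LinearOrder E] {d : ℕ} (χ : (Fin d → E) → ℝ)
    (B : Finset E) : ℝ :=
  if h : B.card = d then χ (finsetTuple B h) else 0

/-! ### Tropical numbers and valuated matroids -/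

/-- `−log|x| ∈ 𝕋 = ℝ ∪ {∞}` (with `−log 0 = ∞`). -/
noncomputable def negLogAbs (x : ℝ) : WithTop ℝ :=
  if x = 0 then ⊤ else ((- Real.log |x| : ℝ) : WithTop ℝ)

/-- The map `𝕋 → ℝ`, `x ↦ e^{−x}` (with `∞ ↦ 0`); it is injective with image `[0,∞)`,
so the topology on `𝕋` making it a homeomorphism onto `[0,∞)` is the topology induced by it. -/
noncomputable def tropToReal : WithTop ℝ → ℝ :=
  WithTop.recTopCoe 0 fun r => Real.exp (-r)

/-- `I_φ(X,Y)`: the set of `i ∈ X \ Y` attaining the minimum of `φ(X∖{i}) + φ(Y∪{i})`. -/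
def argminSet {E : Type*} [DecidableEq E] (φ : Finset E → WithTop ℝ) (X Y : Finset E) :
    Set E :=
  {i | i ∈ X \ Y ∧ ∀ j ∈ X \ Y,
    φ (X.erase i) + φ (insert i Y) ≤ φ (X.erase j) + φ (insert j Y)}

/-- `φ` is a tropical Plücker vector of rank `d`: not identically `∞` on `binom(E,d)`,
and each `I_φ(X,Y)` has cardinality at least `2`. -/
def IsTropPlucker {E : Type*} [DecidableEq E] (d : ℕ) (φ : Finset E → WithTop ℝ) : Prop :=
  (∃ B : Finset E, B.card = d ∧ φ B ≠ ⊤) ∧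
  ∀ X Y : Finset E, X.card = d + 1 → Y.card = d - 1 →
    ∃ i ∈ argminSet φ X Y, ∃ j ∈ argminSet φ X Y, i ≠ j

/-- The (tropical) Plücker coordinates `B ↦ −log|Φ(B)|` of `Φ`. -/
noncomputable def tropOf {E : Type*} [LinearOrder E] {d : ℕ} (Φ : (Fin d → E) → ℝ) :
    Finset E → WithTop ℝ :=
  fun B => negLogAbs (evalOn Φ B)

/-! ### Chirotopes -/

/-- A chirotope of rank `d` on `E`: an alternating `{−1,0,+1}`-valued function,
not identically zero, satisfying the chirotope exchange condition. -/
def IsChirotope {E : Type*} (d : ℕ) (χ : (Fin d → E) → ℝ) : Prop :=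
  (∀ x, χ x = -1 ∨ χ x = 0 ∨ χ x = 1) ∧ IsAlternating χ ∧ (∃ x, χ x ≠ 0) ∧
  ∀ (n : ℕ) (hn : d = n + 1) (X : Fin (d + 1) → E) (Y : Fin n → E),
    (∀ k, delTerm hn χ X Y k = 0) ∨
    ((∃ k, delTerm hn χ X Y k = 1) ∧ ∃ k, delTerm hn χ X Y k = -1)

/-- Compatibility of a chirotope `χ` with a tropical Plücker vector `φ`:
`φ(B) = ∞` iff `χ(B) = 0`, and for every `X ∈ binom(E,d+1)`, `Y ∈ binom(E,d-1)`
(listed in increasing order) there exist indices `i, j` in the argmin set such that the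
corresponding chirotope terms have opposite signs. -/
def ChiCompat {E : Type*} [LinearOrder E] (d : ℕ) (χ : (Fin d → E) → ℝ)
    (φ : Finset E → WithTop ℝ) : Prop :=
  (∀ B : Finset E, B.card = d → (φ B = ⊤ ↔ evalOn χ B = 0)) ∧
  ∀ (n : ℕ) (hn : d = n + 1) (X Y : Finset E) (hX : X.card = d + 1) (hY : Y.card = n),
    ∃ i j : Fin (d + 1),
      (∀ k : Fin (d + 1),
        φ (X.erase (finsetTuple X hX i)) + φ (insert (finsetTuple X hX i) Y) ≤
          φ (X.erase (finsetTuple X hX k)) + φ (insert (finsetTuple X hX k) Y)) ∧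
      (∀ k : Fin (d + 1),
        φ (X.erase (finsetTuple X hX j)) + φ (insert (finsetTuple X hX j) Y) ≤
          φ (X.erase (finsetTuple X hX k)) + φ (insert (finsetTuple X hX k) Y)) ∧
      0 < delTerm hn χ (finsetTuple X hX) (finsetTuple Y hY) i ∧
      delTerm hn χ (finsetTuple X hX) (finsetTuple Y hY) j < 0

/-! ### The cells `C(p,I)` of the Dressian -/

/-- Membership in the cell `C(p,I)`: a tropical Plücker vector with underlying matroid `p`
and initial datum `I`. -/
def IsInC {E : Type*} [DecidableEq E] (d : ℕ) (p : Finset E → Bool)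
    (I : Finset E → Finset E → Set E) (φ : Finset E → WithTop ℝ) : Prop :=
  IsTropPlucker d φ ∧
  (∀ B : Finset E, B.card = d → (p B = true ↔ φ B ≠ ⊤)) ∧
  ∀ X Y : Finset E, X.card = d + 1 → Y.card = d - 1 → argminSet φ X Y = I X Y

/-- The support (set of bases) of a matroid `p : binom(E,d) → {0,1}`. -/
def suppSet {E : Type*} (d : ℕ) (p : Finset E → Bool) : Set (Finset E) :=
  {B | B.card = d ∧ p B = true}

open Classical in
/-- Extend a vector of finite coordinates on `supp(p)` to all of `binom(E,d)` by `∞`. -/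
noncomputable def extendFin {E : Type*} (d : ℕ) (p : Finset E → Bool)
    (f : ↥(suppSet d p) → ℝ) : Finset E → WithTop ℝ :=
  fun B => if h : B ∈ suppSet d p then ((f ⟨B, h⟩ : ℝ) : WithTop ℝ) else ⊤

/-- The cell `C(p,I)`, identified with a subset of `ℝ^{supp(p)}` by recording the finite
coordinates. -/
def CRealCoords {E : Type*} [DecidableEq E] (d : ℕ) (p : Finset E → Bool)
    (I : Finset E → Finset E → Set E) : Set (↥(suppSet d p) → ℝ) :=
  {f | IsInC d p I (extendFin d p f)}

/-- Extend `φ : binom(E,d) → 𝕋` to all finite subsets by `∞`. -/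
noncomputable def extendTrop {E : Type*} (d : ℕ)
    (φ : {B : Finset E // B.card = d} → WithTop ℝ) : Finset E → WithTop ℝ :=
  fun B => if h : B.card = d then φ ⟨B, h⟩ else ⊤

/-- The cell `C(p,I)` as a subset of `𝕋^{binom(E,d)}`. -/
def Cset {E : Type*} [DecidableEq E] (d : ℕ) (p : Finset E → Bool)
    (I : Finset E → Finset E → Set E) : Set ({B : Finset E // B.card = d} → WithTop ℝ) :=
  {φ | IsInC d p I (extendTrop d φ)}

/-- The set of tropical Plücker vectors inside `𝕋^{binom(E,d)}`. -/
def TPVset {E : Type*} [DecidableEq E] (d : ℕ) :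
    Set ({B : Finset E // B.card = d} → WithTop ℝ) :=
  {φ | IsTropPlucker d (extendTrop d φ)}

/-! ### Cells of the space of oriented valuated matroids -/

/-- The cell `D̃(χ,I)`: oriented tropical Plücker vectors with chirotope `χ` and
initial datum `I`. -/
def Dset {E : Type*} [LinearOrder E] (d : ℕ) (χ : (Fin d → E) → ℝ)
    (I : Finset E → Finset E → Set E) : Set ((Fin d → E) → ℝ) :=
  {Φ | IsOrientedTP d Φ ∧ (∀ x, Real.sign (Φ x) = χ x) ∧
    ∀ X Y : Finset E, X.card = d + 1 → Y.card = d - 1 → argminSet (tropOf Φ) X Y = I X Y}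

/-- The Plücker coordinates of an alternating function, indexed by `binom(E,d)`. -/
def toCoords {E : Type*} [LinearOrder E] (d : ℕ) (Φ : (Fin d → E) → ℝ) :
    {B : Finset E // B.card = d} → ℝ :=
  fun B => Φ (finsetTuple B.1 B.2)

/-- The cell `D̃(χ,I)` inside `ℝ^{binom(E,d)}`. -/
def DsetCoords {E : Type*} [LinearOrder E] (d : ℕ) (χ : (Fin d → E) → ℝ)
    (I : Finset E → Finset E → Set E) : Set ({B : Finset E // B.card = d} → ℝ) :=
  toCoords d '' Dset d χ I

/-- `M̃(d,E)` inside `ℝ^{binom(E,d)}`. -/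
def MtCoords {E : Type*} [LinearOrder E] (d : ℕ) :
    Set ({B : Finset E // B.card = d} → ℝ) :=
  toCoords d '' Mt d E

open Classical in
/-- The underlying matroid `|χ|` of a chirotope, as `binom(E,d) → {0,1}`. -/
noncomputable def chiSupp {E : Type*} [LinearOrder E] {d : ℕ} (χ : (Fin d → E) → ℝ) :
    Finset E → Bool :=
  fun B => if evalOn χ B = 0 then false else true

/-- Compatibility of an initial datum `I` with a chirotope `χ`. -/
def InitCompat {E : Type*} [LinearOrder E] (d : ℕ)
    (I : Finset E → Finset E → Set E) (χ : (Fin d → E) → ℝ) : Prop :=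
  (∃ φ : Finset E → WithTop ℝ, IsTropPlucker d φ ∧
      (∀ B : Finset E, B.card = d → (φ B ≠ ⊤ ↔ evalOn χ B ≠ 0)) ∧
      ∀ X Y : Finset E, X.card = d + 1 → Y.card = d - 1 → argminSet φ X Y = I X Y) ∧
  ∀ (n : ℕ) (hn : d = n + 1) (X Y : Finset E) (hX : X.card = d + 1) (hY : Y.card = n),
    (∀ k, delTerm hn χ (finsetTuple X hX) (finsetTuple Y hY) k = 0) ∨
    ∃ kp km : Fin (d + 1),
      finsetTuple X hX kp ∈ I X Y ∧ finsetTuple X hX km ∈ I X Y ∧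
      delTerm hn χ (finsetTuple X hX) (finsetTuple Y hY) kp = 1 ∧
      delTerm hn χ (finsetTuple X hX) (finsetTuple Y hY) km = -1

/-- The maximal initial datum `I_max^χ` compatible with a chirotope `χ`. -/
def Imax {E : Type*} [LinearOrder E] (d : ℕ) (χ : (Fin d → E) → ℝ) :
    Finset E → Finset E → Set E :=
  fun X Y => {x | x ∈ X \ Y ∧ |evalOn χ (X.erase x)| * |evalOn χ (insert x Y)| ≠ 0}

/-! ### The MacPhersonian as a preordered set -/

/-- `τ` is a specialization of `χ`: each Plücker coordinate of `τ` is the corresponding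
coordinate of `χ` or `0`. -/
def SpecRel {E : Type*} [LinearOrder E] (d : ℕ) (χ τ : (Fin d → E) → ℝ) : Prop :=
  ∀ B : Finset E, B.card = d → evalOn τ B = evalOn χ B ∨ evalOn τ B = 0

/-- The equivalence `χ ∼ −χ` on functions `E^d → ℝ`. -/
def ChiSetoid (E : Type*) (d : ℕ) : Setoid ((Fin d → E) → ℝ) where
  r χ τ := τ = χ ∨ τ = -χ
  iseqv := by
    refine ⟨fun x => Or.inl rfl, ?_, ?_⟩
    · rintro x y (rfl | rfl)
      · exact Or.inl rfl
      · exact Or.inr (neg_neg x).symm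
    · rintro x y z (rfl | rfl) (rfl | rfl)
      · exact Or.inl rfl
      · exact Or.inr rfl
      · exact Or.inr rfl
      · exact Or.inl (neg_neg x)

/-- The MacPhersonian: elements are equivalence classes `[χ]` of chirotopes of rank `d` on
`E` under `χ ∼ −χ`. -/
def MacP (E : Type*) (d : ℕ) : Type _ :=
  {q : Quotient (ChiSetoid E d) // ∃ χ, IsChirotope d χ ∧ Quotient.mk (ChiSetoid E d) χ = q}

lemma evalOn_neg {E : Type*} [LinearOrder E] {d : ℕ} (χ : (Fin d → E) → ℝ) (B : Finset E) :
    evalOn (-χ) B = -evalOn χ B := by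
  unfold evalOn
  split <;> simp

/-- The specialization preorder on the MacPhersonian. -/
instance MacP.instPreorder (E : Type*) [LinearOrder E] (d : ℕ) : Preorder (MacP E d) where
  le x y := ∃ a b : (Fin d → E) → ℝ,
    Quotient.mk (ChiSetoid E d) a = x.1 ∧ Quotient.mk (ChiSetoid E d) b = y.1 ∧ SpecRel d a b
  le_refl x := by
    obtain ⟨χ, hχ, hq⟩ := x.2
    exact ⟨χ, χ, hq, hq, fun B _ => Or.inl rfl⟩
  le_trans x y z hxy hyz := by
    obtain ⟨a, b, ha, hb, hab⟩ := hxy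
    obtain ⟨b', c, hb', hc, hbc⟩ := hyz
    have comp : ∀ {u v w : (Fin d → E) → ℝ}, SpecRel d u v → SpecRel d v w → SpecRel d u w := by
      intro u v w h1 h2 B hB
      rcases h2 B hB with h | h
      · rw [h]; exact h1 B hB
      · exact Or.inr h
    have hneg : ∀ {u v : (Fin d → E) → ℝ}, SpecRel d u v → SpecRel d (-u) (-v) := by
      intro u v h B hB
      rw [evalOn_neg, evalOn_neg]
      rcases h B hB with h1 | h1
      · exact Or.inl (by rw [h1])
      · exact Or.inr (by rw [h1, neg_zero])
    have hbb' : b = b' ∨ b = -b' := Quotient.exact (hb'.trans hb.symm)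
    rcases hbb' with h | h
    · subst h
      exact ⟨a, c, ha, hc, comp hab hbc⟩
    · have h1 : SpecRel d b (-c) := by
        have := hneg hbc
        rwa [← h] at this
      refine ⟨a, -c, ha, ?_, comp hab h1⟩
      rw [← hc]
      exact Quotient.sound (Or.inr (neg_neg c).symm)

/-! ### Projectivizations -/

/-- The scaling equivalence on a subset `S ⊆ ℝ^ι`. -/
def scalingSetoid {ι : Type*} (S : Set (ι → ℝ)) : Setoid ↥S where
  r f g := ∃ c : ℝ, c ≠ 0 ∧ (g : ι → ℝ) = c • (f : ι → ℝ)
  iseqv := by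
    refine ⟨fun f => ⟨1, one_ne_zero, (one_smul ℝ _).symm⟩, ?_, ?_⟩
    · rintro f g ⟨c, hc, h⟩
      exact ⟨c⁻¹, inv_ne_zero hc, by rw [h, smul_smul, inv_mul_cancel₀ hc, one_smul]⟩
    · rintro f g h ⟨c, hc, h1⟩ ⟨c', hc', h2⟩
      exact ⟨c' * c, mul_ne_zero hc' hc, by rw [h2, h1, smul_smul]⟩

/-! ### Matroids on the ground set ℕ -/

/-- `Φ : ℕ^d → ℝ` is finitely supported. -/
def FinSupp (d : ℕ) (Φ : (Fin d → ℕ) → ℝ) : Prop :=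
  ∃ S : Finset ℕ, ∀ x : Fin d → ℕ, (∃ i, x i ∉ S) → Φ x = 0

/-- `M̃(d,ℕ)`: finitely supported oriented tropical Plücker vectors of rank `d` on `ℕ`. -/
def MtN (d : ℕ) : Set ((Fin d → ℕ) → ℝ) := {Φ | IsOrientedTP d Φ ∧ FinSupp d Φ}

/-- `M(d,ℕ)`: the projectivization of `M̃(d,ℕ)`, with the quotient topology. -/
abbrev MprojN (d : ℕ) := Quotient (scalingSetoid (MtN d))

/-- Transport along an equality of ranks. -/
def recast {m n : ℕ} (h : m = n) (Φ : (Fin m → ℕ) → ℝ) : (Fin n → ℕ) → ℝ :=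
  fun y => Φ (y ∘ Fin.cast h)

/-! ### Matroid sliding -/

open Classical in
/-- The slide `Φ_t^A` of `Φ` along a tuple `A` of injective maps `E → F` with pairwise
disjoint images, at a point `t` of the standard simplex. -/
noncomputable def slide {E F : Type*} {d n : ℕ} (A : Fin (n + 1) → E → F)
    (t : Fin (n + 1) → ℝ) (Φ : (Fin d → E) → ℝ) : (Fin d → F) → ℝ :=
  fun x =>
    if h : ∀ i, ∃ k e, x i = A k e then
      Φ (fun i => (h i).choose_spec.choose) *
        ∏ k : Fin (n + 1), t k ^ (Finset.univ.filter fun i : Fin d => ∃ e, x i = A k e).card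
    else 0

/-! ### Direct sums -/

/-- `D` is the direct sum `Φ₁ ⊕ Φ₂`: the unique alternating function on
`(E₁ ⊔ E₂)^{d₁+d₂}` vanishing on tuples not having exactly `d₁` entries from `E₁` and
`d₂` entries from `E₂`, and restricting to `(x,y) ↦ Φ₁(x)·Φ₂(y)` on `E₁^{d₁} × E₂^{d₂}`. -/
def IsDirectSum {E₁ E₂ : Type*} {d₁ d₂ : ℕ} (Φ₁ : (Fin d₁ → E₁) → ℝ)
    (Φ₂ : (Fin d₂ → E₂) → ℝ) (D : (Fin (d₁ + d₂) → E₁ ⊕ E₂) → ℝ) : Prop :=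
  IsAlternating D ∧
  (∀ z : Fin (d₁ + d₂) → E₁ ⊕ E₂,
      ¬ ((Finset.univ.filter fun i => (z i).isLeft = true).card = d₁ ∧
          (Finset.univ.filter fun i => (z i).isRight = true).card = d₂) → D z = 0) ∧
  ∀ (x : Fin d₁ → E₁) (y : Fin d₂ → E₂),
    D (Sum.elim (fun a => Sum.inl (x a)) (fun b => Sum.inr (y b)) ∘ finSumFinEquiv.symm) =
      Φ₁ x * Φ₂ y

/-! ### Tropical projective space -/

private lemma trop_add_cancel (w : WithTop ℝ) (lam : ℝ) :
    w = w + (lam : WithTop ℝ) + ((-lam : ℝ) : WithTop ℝ) := by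
  induction w using WithTop.recTopCoe with
  | top => simp
  | coe r => rw [← WithTop.coe_add, ← WithTop.coe_add, WithTop.coe_inj]; ring

/-- The action of `(ℝ,+)` on `𝕋^n ∖ {(∞,…,∞)}` by simultaneous translation. -/
def tropProjSetoid (n : ℕ) : Setoid {x : Fin n → WithTop ℝ // ∃ i, x i ≠ ⊤} where
  r x y := ∃ lam : ℝ, ∀ i, (y : Fin n → WithTop ℝ) i = x.1 i + (lam : WithTop ℝ)
  iseqv := by
    refine ⟨fun x => ⟨0, fun i => by simp⟩, ?_, ?_⟩
    · rintro x y ⟨lam, h⟩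
      refine ⟨-lam, fun i => ?_⟩
      rw [h i]
      exact trop_add_cancel _ _
    · rintro x y z ⟨lam, h1⟩ ⟨mu, h2⟩
      refine ⟨lam + mu, fun i => ?_⟩
      rw [h2 i, h1 i, WithTop.coe_add, add_assoc]

end


/-! ### Auxiliary lemmas for statement 11 -/

namespace Stmt11

open Equiv Equiv.Perm Finset

lemma rsign_mul (a b : ℝ) : Real.sign (a * b) = Real.sign a * Real.sign b := by
  rcases lt_trichotomy a 0 with ha | rfl | ha
  · rcases lt_trichotomy b 0 with hb | rfl | hb
    · rw [Real.sign_of_pos (mul_pos_of_neg_of_neg ha hb), Real.sign_of_neg ha,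
        Real.sign_of_neg hb]; ring
    · simp [Real.sign_zero]
    · rw [Real.sign_of_neg (mul_neg_of_neg_of_pos ha hb), Real.sign_of_neg ha,
        Real.sign_of_pos hb]; ring
  · simp [Real.sign_zero]
  · rcases lt_trichotomy b 0 with hb | rfl | hb
    · rw [Real.sign_of_neg (mul_neg_of_pos_of_neg ha hb), Real.sign_of_pos ha,
        Real.sign_of_neg hb]; ring
    · simp [Real.sign_zero]
    · rw [Real.sign_of_pos (mul_pos ha hb), Real.sign_of_pos ha, Real.sign_of_pos hb]; ring

lemma rsign_neg_one_pow (k : ℕ) : Real.sign ((-1 : ℝ) ^ k) = (-1 : ℝ) ^ k := by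
  rcases Nat.even_or_odd k with h | h
  · rw [h.neg_one_pow, Real.sign_one]
  · rw [h.neg_one_pow, Real.sign_of_neg (by norm_num)]

lemma tropToReal_top : tropToReal ⊤ = 0 := rfl

lemma tropToReal_coe (r : ℝ) : tropToReal (r : WithTop ℝ) = Real.exp (-r) := rfl

lemma tropToReal_nonneg (x : WithTop ℝ) : 0 ≤ tropToReal x := by
  induction x using WithTop.recTopCoe with
  | top => rw [tropToReal_top]
  | coe r => rw [tropToReal_coe]; exact (Real.exp_pos _).le

lemma tropToReal_pos {x : WithTop ℝ} (h : x ≠ ⊤) : 0 < tropToReal x := by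
  induction x using WithTop.recTopCoe with
  | top => exact absurd rfl h
  | coe r => rw [tropToReal_coe]; exact Real.exp_pos _

lemma tropToReal_eq_zero_iff {x : WithTop ℝ} : tropToReal x = 0 ↔ x = ⊤ := by
  constructor
  · intro h
    by_contra hx
    exact (tropToReal_pos hx).ne' h
  · rintro rfl; rfl

lemma tropToReal_add (a b : WithTop ℝ) :
    tropToReal (a + b) = tropToReal a * tropToReal b := by
  induction a using WithTop.recTopCoe with
  | top => rw [top_add, tropToReal_top, zero_mul]
  | coe r =>
    induction b using WithTop.recTopCoe with
    | top => rw [add_top, tropToReal_top, mul_zero]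
    | coe s =>
      rw [← WithTop.coe_add, tropToReal_coe, tropToReal_coe, tropToReal_coe,
        ← Real.exp_add]
      ring_nf

lemma tropToReal_le_iff {a b : WithTop ℝ} : tropToReal b ≤ tropToReal a ↔ a ≤ b := by
  induction a using WithTop.recTopCoe with
  | top =>
    rw [tropToReal_top, top_le_iff]
    constructor
    · intro h
      exact tropToReal_eq_zero_iff.1 (le_antisymm h (tropToReal_nonneg b))
    · rintro rfl; rw [tropToReal_top]
  | coe r =>
    induction b using WithTop.recTopCoe with
    | top =>
      rw [tropToReal_top]
      exact iff_of_true (tropToReal_nonneg _) le_top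
    | coe s =>
      rw [tropToReal_coe, tropToReal_coe, Real.exp_le_exp, neg_le_neg_iff,
        WithTop.coe_le_coe]

lemma negLogAbs_eq_top_iff {x : ℝ} : negLogAbs x = ⊤ ↔ x = 0 := by
  unfold negLogAbs
  split
  · simp [*]
  · simp [*, WithTop.coe_ne_top]

lemma tropToReal_negLogAbs (x : ℝ) : tropToReal (negLogAbs x) = |x| := by
  unfold negLogAbs
  split
  · simp [tropToReal_top, *]
  · rw [tropToReal_coe, neg_neg, Real.exp_log (abs_pos.2 ‹x ≠ 0›)]

lemma negLogAbs_unit_mul {c : ℝ} (hc : |c| = 1) (v : WithTop ℝ) :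
    negLogAbs (c * tropToReal v) = v := by
  induction v using WithTop.recTopCoe with
  | top => rw [tropToReal_top, mul_zero]; exact negLogAbs_eq_top_iff.2 rfl
  | coe r =>
    have hc0 : c ≠ 0 := fun h => by simp [h] at hc
    rw [tropToReal_coe]
    have hne : c * Real.exp (-r) ≠ 0 := mul_ne_zero hc0 (Real.exp_ne_zero _)
    unfold negLogAbs
    rw [if_neg hne, abs_mul, hc, one_mul, abs_of_pos (Real.exp_pos _), Real.log_exp,
      neg_neg]

end Stmt11

namespace Stmt11

open Equiv Equiv.Perm Finset

variable {E : Type*} [LinearOrder E]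

lemma finsetTuple_injective {d : ℕ} (B : Finset E) (h : B.card = d) :
    Function.Injective (finsetTuple B h) := fun a b hab =>
  (B.orderIsoOfFin h).injective (Subtype.ext hab)

lemma finsetTuple_mem {d : ℕ} (B : Finset E) (h : B.card = d) (i : Fin d) :
    finsetTuple B h i ∈ B := (B.orderIsoOfFin h i).2

lemma image_finsetTuple {d : ℕ} (B : Finset E) (h : B.card = d) :
    Finset.image (finsetTuple B h) Finset.univ = B := by
  apply Finset.eq_of_subset_of_card_le
  · intro x hx
    obtain ⟨i, -, rfl⟩ := Finset.mem_image.1 hx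
    exact finsetTuple_mem B h i
  · rw [Finset.card_image_of_injective _ (finsetTuple_injective B h), Finset.card_univ,
      Fintype.card_fin, h]

lemma finsetTuple_surj {d : ℕ} (B : Finset E) (h : B.card = d) {x : E} (hx : x ∈ B) :
    ∃ i, finsetTuple B h i = x :=
  ⟨(B.orderIsoOfFin h).symm ⟨x, hx⟩,
    congrArg Subtype.val ((B.orderIsoOfFin h).apply_symm_apply ⟨x, hx⟩)⟩

lemma exists_sorting {d : ℕ} {Z : Fin d → E} (hZ : Function.Injective Z) :
    ∃ (h : (Finset.image Z Finset.univ).card = d) (σ : Equiv.Perm (Fin d)),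
      Z = finsetTuple _ h ∘ ⇑σ := by
  have h : (Finset.image Z Finset.univ).card = d := by
    rw [Finset.card_image_of_injective _ hZ, Finset.card_univ, Fintype.card_fin]
  refine ⟨h, ?_⟩
  have hmem : ∀ i, Z i ∈ Finset.image Z Finset.univ := fun i =>
    Finset.mem_image_of_mem _ (Finset.mem_univ i)
  have hbij : Function.Bijective (fun i => (⟨Z i, hmem i⟩ : (Finset.image Z Finset.univ : Finset E))) := by
    rw [Fintype.bijective_iff_injective_and_card]
    constructor
    · intro a b hab
      exact hZ (congrArg Subtype.val hab)
    · rw [Fintype.card_fin, Fintype.card_coe, h]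
  let g := Equiv.ofBijective _ hbij
  refine ⟨g.trans ((Finset.image Z Finset.univ).orderIsoOfFin h).toEquiv.symm,
    funext fun i => ?_⟩
  show Z i = finsetTuple _ h (((Finset.image Z Finset.univ).orderIsoOfFin h).toEquiv.symm (g i))
  unfold finsetTuple
  have : ((Finset.image Z Finset.univ).orderIsoOfFin h)
      (((Finset.image Z Finset.univ).orderIsoOfFin h).toEquiv.symm (g i)) = g i := by
    exact ((Finset.image Z Finset.univ).orderIsoOfFin h).apply_symm_apply (g i)
  rw [this]
  rfl

lemma abs_sign_perm {d : ℕ} (σ : Equiv.Perm (Fin d)) :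
    |((Equiv.Perm.sign σ : ℤ) : ℝ)| = 1 := by
  rcases Int.units_eq_one_or (Equiv.Perm.sign σ) with h | h <;> rw [h] <;> norm_num

lemma exists_eps {d : ℕ} {Z : Fin d → E} (hZ : Function.Injective Z) :
    ∃ ε : ℝ, |ε| = 1 ∧ ∀ Ψ : (Fin d → E) → ℝ, IsAlternating Ψ →
      Ψ Z = ε * evalOn Ψ (Finset.image Z Finset.univ) := by
  obtain ⟨h, σ, hσ⟩ := exists_sorting hZ
  refine ⟨((Equiv.Perm.sign σ : ℤ) : ℝ), abs_sign_perm σ, fun Ψ hΨ => ?_⟩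
  conv_lhs => rw [hσ]
  rw [hΨ.1 σ, evalOn, dif_pos h]

lemma card_image_univ_ne {d : ℕ} {Z : Fin d → E} (hZ : ¬ Function.Injective Z) :
    (Finset.image Z Finset.univ).card ≠ d := by
  intro hcard
  apply hZ
  have : Set.InjOn Z (Finset.univ : Finset (Fin d)) := by
    apply Finset.card_image_iff.mp
    rw [hcard, Finset.card_univ, Fintype.card_fin]
  exact fun a b hab => this (Finset.mem_coe.2 (Finset.mem_univ a))
    (Finset.mem_coe.2 (Finset.mem_univ b)) hab

lemma abs_eq_tropToReal {d : ℕ} {Φ : (Fin d → E) → ℝ} (hΦ : IsAlternating Φ)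
    (Z : Fin d → E) :
    |Φ Z| = tropToReal (tropOf Φ (Finset.image Z Finset.univ)) := by
  rw [tropOf, tropToReal_negLogAbs]
  by_cases hZ : Function.Injective Z
  · obtain ⟨ε, hε, he⟩ := exists_eps hZ
    rw [he Φ hΦ, abs_mul, hε, one_mul]
  · rw [hΦ.2 Z hZ, abs_zero, evalOn, dif_neg (card_image_univ_ne hZ), abs_zero]

lemma image_comp_equiv {d : ℕ} (x : Fin d → E) (σ : Equiv.Perm (Fin d)) :
    Finset.image (x ∘ ⇑σ) Finset.univ = Finset.image x Finset.univ := by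
  rw [← Finset.image_image, Finset.image_univ_equiv]

lemma image_comp_succAbove {d : ℕ} (X : Finset E) (hX : X.card = d + 1) (k : Fin (d + 1)) :
    Finset.image (finsetTuple X hX ∘ k.succAbove) Finset.univ
      = X.erase (finsetTuple X hX k) := by
  apply Finset.eq_of_subset_of_card_le
  · intro x hx
    obtain ⟨j, -, rfl⟩ := Finset.mem_image.1 hx
    refine Finset.mem_erase.2 ⟨fun hEq => ?_, finsetTuple_mem _ _ _⟩
    exact k.succAbove_ne j (finsetTuple_injective _ _ hEq)
  · rw [Finset.card_erase_of_mem (finsetTuple_mem _ _ _), hX,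
      Finset.card_image_of_injective _
        ((finsetTuple_injective X hX).comp (Fin.succAbove_right_injective)),
      Finset.card_univ, Fintype.card_fin]
    omega

lemma image_cons {n : ℕ} (a : E) (Ys : Fin n → E) :
    Finset.image (Fin.cons a Ys : Fin (n + 1) → E) Finset.univ
      = insert a (Finset.image Ys Finset.univ) := by
  ext x
  simp only [Finset.mem_image, Finset.mem_univ, true_and, Finset.mem_insert]
  constructor
  · rintro ⟨i, rfl⟩
    refine Fin.cases ?_ (fun j => ?_) i
    · left; rw [Fin.cons_zero]
    · right; exact ⟨j, rfl⟩
  · rintro (rfl | ⟨j, rfl⟩)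
    · exact ⟨0, Fin.cons_zero _ _⟩
    · exact ⟨j.succ, Fin.cons_succ _ _ _⟩

end Stmt11

namespace Stmt11

open Equiv Equiv.Perm Finset

variable {E : Type*}

lemma delTerm_eq {n : ℕ} (hn' : n + 1 = n + 1) (Φ : (Fin (n + 1) → E) → ℝ)
    (X : Fin (n + 1 + 1) → E) (Y : Fin n → E) (i : Fin (n + 1 + 1)) :
    delTerm hn' Φ X Y i
      = (-1 : ℝ) ^ (i : ℕ) * Φ (X ∘ i.succAbove) * Φ (Fin.cons (X i) Y) := by
  have hc : Fin.cons (X i) Y ∘ Fin.cast hn' = Fin.cons (X i) Y := by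
    funext j
    have : Fin.cast hn' j = j := Fin.ext (by simp)
    rw [Function.comp_apply, this]
  rw [delTerm, hc]

lemma alt_succAbove_perm {n : ℕ} {χ : (Fin n → E) → ℝ} (hχ : IsAlternating χ)
    (σ : Equiv.Perm (Fin (n + 1))) (X : Fin (n + 1) → E) (i : Fin (n + 1)) :
    (-1 : ℝ) ^ (i : ℕ) * χ ((X ∘ ⇑σ) ∘ i.succAbove)
      = ((Equiv.Perm.sign σ : ℤ) : ℝ)
        * ((-1 : ℝ) ^ ((σ i : Fin (n + 1)) : ℕ) * χ (X ∘ (σ i).succAbove)) := by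
  set π : Equiv.Perm (Fin (n + 1)) :=
    (i.cycleRange.symm.trans σ).trans (σ i).cycleRange with hπdef
  have hπ0 : π 0 = 0 := by
    simp only [hπdef, Equiv.trans_apply, Fin.cycleRange_symm_zero, Fin.cycleRange_self]
  obtain ⟨⟨p, ρ⟩, hpair⟩ :
      ∃ pr : Fin (n + 1) × Equiv.Perm (Fin n), π = Equiv.Perm.decomposeFin.symm pr :=
    ⟨Equiv.Perm.decomposeFin π, (Equiv.symm_apply_apply _ _).symm⟩
  have hp : p = 0 := by
    rw [hpair] at hπ0
    simpa using hπ0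
  subst hp
  have happ : ∀ j : Fin n, π j.succ = (ρ j).succ := by
    intro j
    rw [hpair]
    simp
  have hsignπ : Equiv.Perm.sign π = Equiv.Perm.sign ρ := by
    rw [hpair]
    simp
  have hkey : ∀ j : Fin n, σ (i.succAbove j) = (σ i).succAbove (ρ j) := by
    intro j
    have h1 : (σ i).cycleRange (σ (i.cycleRange.symm j.succ)) = (ρ j).succ := by
      have h3 := happ j
      simpa only [hπdef, Equiv.trans_apply] using h3
    have h2 : i.succAbove j = i.cycleRange.symm j.succ := (Fin.cycleRange_symm_succ i j).symm
    have h4 := congrArg (σ i).cycleRange.symm h1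
    simp only [Equiv.symm_apply_apply, Fin.cycleRange_symm_succ] at h4
    exact h4
  have hcomp : (X ∘ ⇑σ) ∘ i.succAbove = (X ∘ (σ i).succAbove) ∘ ⇑ρ := by
    funext j
    simp only [Function.comp_apply, hkey j]
  -- sign computation
  have hπmul : π = (σ i).cycleRange * σ * i.cycleRange⁻¹ := by
    ext x
    simp [hπdef, Equiv.Perm.mul_apply, Equiv.Perm.inv_def]
  have hsr : ((Equiv.Perm.sign ρ : ℤ) : ℝ)
      = (-1 : ℝ) ^ ((σ i : Fin (n + 1)) : ℕ) * ((Equiv.Perm.sign σ : ℤ) : ℝ)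
        * (-1 : ℝ) ^ (i : ℕ) := by
    have h5 : Equiv.Perm.sign ρ
        = Equiv.Perm.sign ((σ i).cycleRange) * Equiv.Perm.sign σ
          * Equiv.Perm.sign (i.cycleRange) := by
      rw [← hsignπ, hπmul, map_mul, map_mul, Equiv.Perm.sign_inv]
    rw [h5, Fin.sign_cycleRange, Fin.sign_cycleRange]
    push_cast
    ring
  rw [hcomp, hχ.1 ρ, hsr]
  have hsq : (-1 : ℝ) ^ (i : ℕ) * (-1 : ℝ) ^ (i : ℕ) = 1 := by
    rw [← mul_pow]; norm_num
  linear_combination ((-1 : ℝ) ^ ((σ i : Fin (n + 1)) : ℕ)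
    * ((Equiv.Perm.sign σ : ℤ) : ℝ) * χ (X ∘ (σ i).succAbove)) * hsq

lemma delTerm_comp_perm {n : ℕ} (hn' : n + 1 = n + 1) {Φ : (Fin (n + 1) → E) → ℝ}
    (hΦ : IsAlternating Φ) (σ : Equiv.Perm (Fin (n + 1 + 1))) (X : Fin (n + 1 + 1) → E)
    (Y : Fin n → E) (i : Fin (n + 1 + 1)) :
    delTerm hn' Φ (X ∘ ⇑σ) Y i
      = ((Equiv.Perm.sign σ : ℤ) : ℝ) * delTerm hn' Φ X Y (σ i) := by
  rw [delTerm_eq, delTerm_eq]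
  have h := alt_succAbove_perm hΦ σ X i
  simp only [Function.comp_apply]
  linear_combination Φ (Fin.cons (X (σ i)) Y) * h

lemma delTerm_comp_permY {n : ℕ} (hn' : n + 1 = n + 1) {Φ : (Fin (n + 1) → E) → ℝ}
    (hΦ : IsAlternating Φ) (τ : Equiv.Perm (Fin n)) (X : Fin (n + 1 + 1) → E)
    (Y : Fin n → E) (i : Fin (n + 1 + 1)) :
    delTerm hn' Φ X (Y ∘ ⇑τ) i
      = ((Equiv.Perm.sign τ : ℤ) : ℝ) * delTerm hn' Φ X Y i := by
  rw [delTerm_eq, delTerm_eq]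
  have hco : ∀ a : E, (Fin.cons a (Y ∘ ⇑τ) : Fin (n + 1) → E)
      = (Fin.cons a Y : Fin (n + 1) → E) ∘ ⇑(Equiv.Perm.decomposeFin.symm (0, τ)) := by
    intro a
    funext j
    refine Fin.cases ?_ (fun k => ?_) j
    · simp
    · simp
  rw [hco (X i), hΦ.1 (Equiv.Perm.decomposeFin.symm (0, τ))]
  have hs : ((Equiv.Perm.sign (Equiv.Perm.decomposeFin.symm ((0 : Fin (n + 1)), τ)) : ℤ) : ℝ)
      = ((Equiv.Perm.sign τ : ℤ) : ℝ) := by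
    simp
  rw [hs]
  ring

end Stmt11

namespace Stmt11

open Equiv Equiv.Perm Finset

variable {E : Type*} [LinearOrder E]

lemma abs_delTerm {m : ℕ} (hn' : m + 1 = m + 1) {Φ : (Fin (m + 1) → E) → ℝ}
    (hAlt : IsAlternating Φ) (X Y : Finset E) (hX : X.card = m + 1 + 1) (hY : Y.card = m)
    (k : Fin (m + 1 + 1)) :
    |delTerm hn' Φ (finsetTuple X hX) (finsetTuple Y hY) k|
      = tropToReal (tropOf Φ (X.erase (finsetTuple X hX k))
          + tropOf Φ (insert (finsetTuple X hX k) Y)) := by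
  rw [delTerm_eq, abs_mul, abs_mul, abs_pow, abs_neg, abs_one, one_pow, one_mul,
    abs_eq_tropToReal hAlt, abs_eq_tropToReal hAlt, image_comp_succAbove, image_cons,
    image_finsetTuple, tropToReal_add]

lemma delTerm_zero_of_memY {m : ℕ} (hn' : m + 1 = m + 1) {Φ : (Fin (m + 1) → E) → ℝ}
    (hAlt : IsAlternating Φ) (X Y : Finset E) (hX : X.card = m + 1 + 1) (hY : Y.card = m)
    (k : Fin (m + 1 + 1)) (hmem : finsetTuple X hX k ∈ Y) :
    delTerm hn' Φ (finsetTuple X hX) (finsetTuple Y hY) k = 0 := by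
  rw [delTerm_eq]
  obtain ⟨j, hj⟩ := finsetTuple_surj Y hY hmem
  have hni : ¬ Function.Injective (Fin.cons (finsetTuple X hX k) (finsetTuple Y hY)
      : Fin (m + 1) → E) := by
    intro hinj
    obtain ⟨hr, -⟩ := Fin.cons_injective_iff.1 hinj
    exact hr ⟨j, hj⟩
  rw [hAlt.2 _ hni, mul_zero]

lemma notMemY_of_delTerm_ne {m : ℕ} (hn' : m + 1 = m + 1) {Φ : (Fin (m + 1) → E) → ℝ}
    (hAlt : IsAlternating Φ) (X Y : Finset E) (hX : X.card = m + 1 + 1) (hY : Y.card = m)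
    (k : Fin (m + 1 + 1))
    (hk : delTerm hn' Φ (finsetTuple X hX) (finsetTuple Y hY) k ≠ 0) :
    finsetTuple X hX k ∉ Y :=
  fun hmem => hk (delTerm_zero_of_memY hn' hAlt X Y hX hY k hmem)

lemma mem_argmin_of_max {m : ℕ} (hn' : m + 1 = m + 1) {Φ : (Fin (m + 1) → E) → ℝ}
    (hAlt : IsAlternating Φ) (X Y : Finset E) (hX : X.card = m + 1 + 1) (hY : Y.card = m)
    (k : Fin (m + 1 + 1))
    (hk0 : delTerm hn' Φ (finsetTuple X hX) (finsetTuple Y hY) k ≠ 0)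
    (hmax : ∀ j, |delTerm hn' Φ (finsetTuple X hX) (finsetTuple Y hY) j|
      ≤ |delTerm hn' Φ (finsetTuple X hX) (finsetTuple Y hY) k|) :
    finsetTuple X hX k ∈ argminSet (tropOf Φ) X Y := by
  refine ⟨Finset.mem_sdiff.2 ⟨finsetTuple_mem _ _ _,
    notMemY_of_delTerm_ne hn' hAlt X Y hX hY k hk0⟩, ?_⟩
  intro j hj
  obtain ⟨l, rfl⟩ := finsetTuple_surj X hX (Finset.mem_sdiff.1 hj).1
  rw [← tropToReal_le_iff, ← abs_delTerm hn' hAlt X Y hX hY l,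
    ← abs_delTerm hn' hAlt X Y hX hY k]
  exact hmax l

end Stmt11

/-! ## Statement 11 -/

open Stmt11

theorem statement11 {E : Type*} [Fintype E] [LinearOrder E] (d : ℕ) (hd : 1 ≤ d)
    (χ : (Fin d → E) → ℝ) (hχ : IsChirotope d χ)
    (I : Finset E → Finset E → Set E) (hI : ∀ X Y : Finset E, I X Y ⊆ ↑(X \ Y)) :
    (Dset d χ I).Nonempty ↔ InitCompat d I χ := by
  obtain ⟨m, rfl⟩ : ∃ m, d = m + 1 := ⟨d - 1, by omega⟩
  constructor
  · rintro ⟨Φ, ⟨hAlt, ⟨x0, hx0⟩, hrel⟩, hsign, hargmin⟩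
    have hzero_iff : ∀ t : Fin (m + 1) → E, Φ t = 0 ↔ χ t = 0 := by
      intro t
      rw [← hsign t]
      exact ⟨fun h => by rw [h, Real.sign_zero], fun h => Real.sign_eq_zero_iff.1 h⟩
    constructor
    · refine ⟨tropOf Φ, ⟨?_, ?_⟩, ?_, hargmin⟩
      · -- existence of a basis
        have hx0inj : Function.Injective x0 := by
          by_contra h
          exact hx0 (hAlt.2 x0 h)
        obtain ⟨ε, hε, he⟩ := exists_eps hx0inj
        refine ⟨Finset.image x0 Finset.univ,
          by rw [Finset.card_image_of_injective _ hx0inj, Finset.card_univ,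
            Fintype.card_fin], ?_⟩
        rw [tropOf, Ne, negLogAbs_eq_top_iff]
        intro h0
        apply hx0
        rw [he Φ hAlt, h0, mul_zero]
      · -- argmin sets have ≥ 2 elements
        intro X Y hX hY
        have hY' : Y.card = m := by omega
        rcases hrel m rfl (finsetTuple X hX) (finsetTuple Y hY')
          with hall | ⟨ip, im, hip, him, hmaxp, hmaxm⟩
        · have hsum : ∀ a ∈ X \ Y, tropOf Φ (X.erase a) + tropOf Φ (insert a Y) = ⊤ := by
            intro a ha
            obtain ⟨k, rfl⟩ := finsetTuple_surj X hX (Finset.mem_sdiff.1 ha).1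
            have habs := abs_delTerm rfl hAlt X Y hX hY' k
            rw [hall k, abs_zero] at habs
            exact tropToReal_eq_zero_iff.1 habs.symm
          have h2 : 1 < (X \ Y).card := by
            have := Finset.le_card_sdiff Y X
            omega
          obtain ⟨a, ha, b, hb, hab⟩ := Finset.one_lt_card.1 h2
          refine ⟨a, ⟨ha, fun j hj => ?_⟩, b, ⟨hb, fun j hj => ?_⟩, hab⟩
          · rw [hsum j hj]; exact le_top
          · rw [hsum j hj]; exact le_top
        · refine ⟨finsetTuple X hX ip,
            mem_argmin_of_max rfl hAlt X Y hX hY' ip hip.ne'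
              (fun j => (hmaxp j).trans_eq (abs_of_pos hip).symm),
            finsetTuple X hX im,
            mem_argmin_of_max rfl hAlt X Y hX hY' im him.ne
              (fun j => (hmaxm j).trans_eq (abs_of_neg him).symm), ?_⟩
          intro h
          have := finsetTuple_injective X hX h
          subst this
          exact absurd hip (not_lt.2 him.le)
      · -- support
        intro B hB
        rw [tropOf, Ne, negLogAbs_eq_top_iff, evalOn, evalOn, dif_pos hB, dif_pos hB]
        exact not_congr (hzero_iff _)
    · -- second clause : signs
      intro n hn X Y hX hY
      obtain rfl : n = m := by omega
      have hS : ∀ k, delTerm hn χ (finsetTuple X hX) (finsetTuple Y hY) k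
          = Real.sign (delTerm hn Φ (finsetTuple X hX) (finsetTuple Y hY) k) := by
        intro k
        rw [delTerm_eq, delTerm_eq, rsign_mul, rsign_mul, hsign, hsign, rsign_neg_one_pow]
      rcases hrel n hn (finsetTuple X hX) (finsetTuple Y hY)
        with hall | ⟨ip, im, hip, him, hmaxp, hmaxm⟩
      · left
        intro k
        rw [hS k, hall k, Real.sign_zero]
      · right
        have hIX : argminSet (tropOf Φ) X Y = I X Y := hargmin X Y hX (by omega)
        refine ⟨ip, im, ?_, ?_, ?_, ?_⟩
        · rw [← hIX]
          exact mem_argmin_of_max hn hAlt X Y hX hY ip hip.ne'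
            (fun j => (hmaxp j).trans_eq (abs_of_pos hip).symm)
        · rw [← hIX]
          exact mem_argmin_of_max hn hAlt X Y hX hY im him.ne
            (fun j => (hmaxm j).trans_eq (abs_of_neg him).symm)
        · rw [hS ip, Real.sign_of_pos hip]
        · rw [hS im, Real.sign_of_neg him]
  · rintro ⟨⟨φ, hTP, hsupp, hargmin⟩, hsgn2⟩
    obtain ⟨hvals, hAltχ, hχne, -⟩ := hχ
    have habs1 : ∀ x : Fin (m + 1) → E, |χ x| ≤ 1 := by
      intro x; rcases hvals x with h | h | h <;> rw [h] <;> norm_num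
    have habs1' : ∀ x : Fin (m + 1) → E, χ x ≠ 0 → |χ x| = 1 := by
      intro x hx; rcases hvals x with h | h | h <;> simp [h] at hx ⊢
    set Φ : (Fin (m + 1) → E) → ℝ :=
      fun x => χ x * tropToReal (φ (Finset.image x Finset.univ)) with hΦdef
    have hAlt : IsAlternating Φ := by
      constructor
      · intro σ x
        simp only [hΦdef]
        rw [image_comp_equiv, hAltχ.1 σ]
        ring
      · intro x hx
        simp only [hΦdef]
        rw [hAltχ.2 x hx, zero_mul]
    have hevalχ : ∀ (B : Finset E) (hB : B.card = m + 1),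
        evalOn χ B = χ (finsetTuple B hB) := by
      intro B hB; rw [evalOn, dif_pos hB]
    have hevalOn : ∀ (B : Finset E) (hB : B.card = m + 1),
        evalOn Φ B = χ (finsetTuple B hB) * tropToReal (φ B) := by
      intro B hB
      rw [evalOn, dif_pos hB]
      simp only [hΦdef]
      rw [image_finsetTuple]
    have htrop : ∀ B : Finset E, B.card = m + 1 → tropOf Φ B = φ B := by
      intro B hB
      rw [tropOf, hevalOn B hB]
      by_cases hBtop : φ B = ⊤
      · rw [hBtop, tropToReal_top, mul_zero]
        exact negLogAbs_eq_top_iff.2 rfl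
      · have hχB : evalOn χ B ≠ 0 := (hsupp B hB).1 hBtop
        rw [hevalχ B hB] at hχB
        exact negLogAbs_unit_mul (habs1' _ hχB) (φ B)
    have hsign : ∀ x, Real.sign (Φ x) = χ x := by
      intro x
      by_cases hx : χ x = 0
      · simp only [hΦdef]
        rw [hx, zero_mul, Real.sign_zero]
      · have hxinj : Function.Injective x := by
          by_contra h
          exact hx (hAltχ.2 x h)
        have hcard : (Finset.image x Finset.univ).card = m + 1 := by
          rw [Finset.card_image_of_injective _ hxinj, Finset.card_univ, Fintype.card_fin]
        obtain ⟨ε, hε, he⟩ := exists_eps hxinj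
        have hχB : evalOn χ (Finset.image x Finset.univ) ≠ 0 := by
          intro h0
          apply hx
          rw [he χ hAltχ, h0, mul_zero]
        have hφx : φ (Finset.image x Finset.univ) ≠ ⊤ := (hsupp _ hcard).2 hχB
        simp only [hΦdef]
        rw [rsign_mul, Real.sign_of_pos (tropToReal_pos hφx), mul_one]
        rcases hvals x with h | h | h
        · rw [h]; exact Real.sign_of_neg (by norm_num)
        · exact absurd h hx
        · rw [h]; exact Real.sign_one
    have hΦne : ∃ x, Φ x ≠ 0 := by
      obtain ⟨B, hB, hBtop⟩ := hTP.1
      refine ⟨finsetTuple B hB, ?_⟩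
      have h1 : evalOn Φ B ≠ 0 := by
        rw [hevalOn B hB]
        refine mul_ne_zero (fun h => (hsupp B hB).1 hBtop ?_) (tropToReal_pos hBtop).ne'
        rw [hevalχ B hB]; exact h
      rw [evalOn, dif_pos hB] at h1
      exact h1
    have hargmin' : ∀ X Y : Finset E, X.card = m + 1 + 1 → Y.card = m + 1 - 1 →
        argminSet (tropOf Φ) X Y = I X Y := by
      intro X Y hX hY
      rw [← hargmin X Y hX hY]
      have hEq : ∀ a ∈ X \ Y, tropOf Φ (X.erase a) + tropOf Φ (insert a Y)
          = φ (X.erase a) + φ (insert a Y) := by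
        intro a ha
        obtain ⟨haX, haY⟩ := Finset.mem_sdiff.1 ha
        rw [htrop _ (by rw [Finset.card_erase_of_mem haX]; omega),
          htrop _ (by rw [Finset.card_insert_of_notMem haY]; omega)]
      ext a
      simp only [argminSet, Set.mem_setOf_eq]
      constructor
      · rintro ⟨ha, hmin⟩
        exact ⟨ha, fun j hj => by rw [← hEq a ha, ← hEq j hj]; exact hmin j hj⟩
      · rintro ⟨ha, hmin⟩
        exact ⟨ha, fun j hj => by rw [hEq a ha, hEq j hj]; exact hmin j hj⟩
    refine ⟨Φ, ⟨hAlt, hΦne, ?_⟩, hsign, hargmin'⟩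
    intro n hn X Y
    obtain rfl : n = m := by omega
    by_cases hYinj : Function.Injective Y
    · by_cases hXinj : Function.Injective X
      · -- both injective : reduce to sorted finsets
        obtain ⟨hX', σ, hXs⟩ := exists_sorting hXinj
        obtain ⟨hY', τ, hYs⟩ := exists_sorting hYinj
        have hTdec : ∀ k, delTerm hn Φ (finsetTuple _ hX') (finsetTuple _ hY') k
            = delTerm hn χ (finsetTuple _ hX') (finsetTuple _ hY') k
              * (tropToReal (φ ((Finset.image X Finset.univ).erase
                    (finsetTuple _ hX' k)))
                * tropToReal (φ (insert (finsetTuple _ hX' k)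
                    (Finset.image Y Finset.univ)))) := by
          intro k
          rw [delTerm_eq, delTerm_eq]
          simp only [hΦdef]
          rw [image_comp_succAbove, image_cons, image_finsetTuple]
          ring
        have main : (∀ k, delTerm hn Φ (finsetTuple _ hX') (finsetTuple _ hY') k = 0) ∨
            ∃ ip im : Fin (n + 1 + 1),
              0 < delTerm hn Φ (finsetTuple _ hX') (finsetTuple _ hY') ip ∧
              delTerm hn Φ (finsetTuple _ hX') (finsetTuple _ hY') im < 0 ∧
              (∀ k, |delTerm hn Φ (finsetTuple _ hX') (finsetTuple _ hY') k|
                ≤ delTerm hn Φ (finsetTuple _ hX') (finsetTuple _ hY') ip) ∧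
              ∀ k, |delTerm hn Φ (finsetTuple _ hX') (finsetTuple _ hY') k|
                ≤ -delTerm hn Φ (finsetTuple _ hX') (finsetTuple _ hY') im := by
          rcases hsgn2 n hn (Finset.image X Finset.univ) (Finset.image Y Finset.univ)
            hX' hY' with hall | ⟨kp, km, hkpI, hkmI, hSp, hSm⟩
          · left
            intro k
            rw [hTdec k, hall k, zero_mul]
          · right
            have hargEq := hargmin (Finset.image X Finset.univ)
              (Finset.image Y Finset.univ) hX' (by omega)
            rw [← hargEq] at hkpI hkmI
            obtain ⟨hkpXY, hkpmin⟩ := hkpI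
            obtain ⟨hkmXY, hkmmin⟩ := hkmI
            have hfac : ∀ k, delTerm hn χ (finsetTuple _ hX') (finsetTuple _ hY') k ≠ 0 →
                φ ((Finset.image X Finset.univ).erase (finsetTuple _ hX' k)) ≠ ⊤ ∧
                φ (insert (finsetTuple _ hX' k) (Finset.image Y Finset.univ)) ≠ ⊤ ∧
                finsetTuple _ hX' k ∉ Finset.image Y Finset.univ := by
              intro k hk
              rw [delTerm_eq] at hk
              have hA : χ (finsetTuple _ hX' ∘ k.succAbove) ≠ 0 := by
                intro h; apply hk; rw [h]; ring
              have hB : χ (Fin.cons (finsetTuple _ hX' k) (finsetTuple _ hY')) ≠ 0 := by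
                intro h; apply hk; rw [h]; ring
              have hinjB : Function.Injective
                  (Fin.cons (finsetTuple _ hX' k) (finsetTuple _ hY')
                    : Fin (n + 1) → E) := by
                by_contra h
                exact hB (hAltχ.2 _ h)
              have hnotmem : finsetTuple _ hX' k ∉ Finset.image Y Finset.univ := by
                have hr := (Fin.cons_injective_iff.1 hinjB).1
                intro hmem
                obtain ⟨j, hj⟩ := finsetTuple_surj _ hY' hmem
                exact hr ⟨j, hj⟩
              refine ⟨?_, ?_, hnotmem⟩
              · have hinj : Function.Injective (finsetTuple _ hX' ∘ k.succAbove) :=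
                  (finsetTuple_injective _ _).comp Fin.succAbove_right_injective
                obtain ⟨ε, hε, he⟩ := exists_eps hinj
                have h0 : evalOn χ (Finset.image (finsetTuple _ hX' ∘ k.succAbove)
                    Finset.univ) ≠ 0 := by
                  intro h0; apply hA; rw [he χ hAltχ, h0, mul_zero]
                rw [image_comp_succAbove] at h0
                refine (hsupp _ ?_).2 h0
                rw [Finset.card_erase_of_mem (finsetTuple_mem _ _ _)]; omega
              · obtain ⟨ε, hε, he⟩ := exists_eps hinjB
                have h0 : evalOn χ (Finset.image
                    (Fin.cons (finsetTuple _ hX' k) (finsetTuple _ hY')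
                      : Fin (n + 1) → E) Finset.univ) ≠ 0 := by
                  intro h0; apply hB; rw [he χ hAltχ, h0, mul_zero]
                rw [image_cons, image_finsetTuple] at h0
                refine (hsupp _ ?_).2 h0
                rw [Finset.card_insert_of_notMem hnotmem]; omega
            have hSabs : ∀ k,
                |delTerm hn χ (finsetTuple _ hX') (finsetTuple _ hY') k| ≤ 1 := by
              intro k
              rw [delTerm_eq, abs_mul, abs_mul, abs_pow, abs_neg, abs_one, one_pow,
                one_mul]
              exact mul_le_one₀ (habs1 _) (abs_nonneg _) (habs1 _)
            have hTabs : ∀ k, |delTerm hn Φ (finsetTuple _ hX') (finsetTuple _ hY') k|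
                ≤ tropToReal (φ ((Finset.image X Finset.univ).erase (finsetTuple _ hX' k))
                    + φ (insert (finsetTuple _ hX' k) (Finset.image Y Finset.univ))) := by
              intro k
              rw [hTdec k, abs_mul, tropToReal_add,
                abs_of_nonneg (mul_nonneg (tropToReal_nonneg _) (tropToReal_nonneg _))]
              calc |delTerm hn χ (finsetTuple _ hX') (finsetTuple _ hY') k|
                    * (tropToReal (φ ((Finset.image X Finset.univ).erase
                        (finsetTuple _ hX' k)))
                      * tropToReal (φ (insert (finsetTuple _ hX' k)
                        (Finset.image Y Finset.univ))))
                  ≤ 1 * (tropToReal (φ ((Finset.image X Finset.univ).erase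
                        (finsetTuple _ hX' k)))
                      * tropToReal (φ (insert (finsetTuple _ hX' k)
                        (Finset.image Y Finset.univ)))) :=
                    mul_le_mul_of_nonneg_right (hSabs k)
                      (mul_nonneg (tropToReal_nonneg _) (tropToReal_nonneg _))
                _ = _ := one_mul _
            have hTp : delTerm hn Φ (finsetTuple _ hX') (finsetTuple _ hY') kp
                = tropToReal (φ ((Finset.image X Finset.univ).erase (finsetTuple _ hX' kp))
                    + φ (insert (finsetTuple _ hX' kp) (Finset.image Y Finset.univ))) := by
              rw [hTdec kp, hSp, one_mul, tropToReal_add]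
            have hTm : delTerm hn Φ (finsetTuple _ hX') (finsetTuple _ hY') km
                = -tropToReal (φ ((Finset.image X Finset.univ).erase (finsetTuple _ hX' km))
                    + φ (insert (finsetTuple _ hX' km) (Finset.image Y Finset.univ))) := by
              rw [hTdec km, hSm, tropToReal_add]
              ring
            have hfp := hfac kp (by rw [hSp]; norm_num)
            have hfm := hfac km (by rw [hSm]; norm_num)
            have hppos : 0 < tropToReal (φ ((Finset.image X Finset.univ).erase
                (finsetTuple _ hX' kp))
                + φ (insert (finsetTuple _ hX' kp) (Finset.image Y Finset.univ))) :=
              tropToReal_pos (WithTop.add_ne_top.2 ⟨hfp.1, hfp.2.1⟩)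
            have hmpos : 0 < tropToReal (φ ((Finset.image X Finset.univ).erase
                (finsetTuple _ hX' km))
                + φ (insert (finsetTuple _ hX' km) (Finset.image Y Finset.univ))) :=
              tropToReal_pos (WithTop.add_ne_top.2 ⟨hfm.1, hfm.2.1⟩)
            have hmaxgen : ∀ (k0 : Fin (n + 1 + 1)),
                (∀ j ∈ (Finset.image X Finset.univ) \ (Finset.image Y Finset.univ),
                  φ ((Finset.image X Finset.univ).erase (finsetTuple _ hX' k0))
                    + φ (insert (finsetTuple _ hX' k0) (Finset.image Y Finset.univ))
                  ≤ φ ((Finset.image X Finset.univ).erase j) + φ (insert j (Finset.image Y Finset.univ))) →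
                ∀ k, |delTerm hn Φ (finsetTuple _ hX') (finsetTuple _ hY') k|
                  ≤ tropToReal (φ ((Finset.image X Finset.univ).erase (finsetTuple _ hX' k0))
                    + φ (insert (finsetTuple _ hX' k0) (Finset.image Y Finset.univ))) := by
              intro k0 hmin k
              by_cases hk : delTerm hn χ (finsetTuple _ hX') (finsetTuple _ hY') k = 0
              · rw [hTdec k, hk, zero_mul, abs_zero]
                exact tropToReal_nonneg _
              · have hmem : finsetTuple _ hX' k ∈
                    (Finset.image X Finset.univ) \ (Finset.image Y Finset.univ) :=
                  Finset.mem_sdiff.2 ⟨finsetTuple_mem _ _ _, (hfac k hk).2.2⟩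
                exact (hTabs k).trans (tropToReal_le_iff.2 (hmin _ hmem))
            refine ⟨kp, km, ?_, ?_, ?_, ?_⟩
            · rw [hTp]; exact hppos
            · rw [hTm]; linarith
            · intro k
              rw [hTp]
              exact hmaxgen kp hkpmin k
            · intro k
              rw [hTm, neg_neg]
              exact hmaxgen km hkmmin k
        have key : ∀ i, delTerm hn Φ X Y i
            = (((Equiv.Perm.sign σ : ℤ) : ℝ) * ((Equiv.Perm.sign τ : ℤ) : ℝ))
              * delTerm hn Φ (finsetTuple _ hX') (finsetTuple _ hY') (σ i) := by
          intro i
          conv_lhs => rw [hXs, hYs]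
          rw [delTerm_comp_permY hn hAlt τ, delTerm_comp_perm hn hAlt σ]
          ring
        have hεcases : ((Equiv.Perm.sign σ : ℤ) : ℝ) * ((Equiv.Perm.sign τ : ℤ) : ℝ) = 1
            ∨ ((Equiv.Perm.sign σ : ℤ) : ℝ) * ((Equiv.Perm.sign τ : ℤ) : ℝ) = -1 := by
          rcases Int.units_eq_one_or (Equiv.Perm.sign σ) with h1 | h1 <;>
            rcases Int.units_eq_one_or (Equiv.Perm.sign τ) with h2 | h2 <;>
              rw [h1, h2] <;> norm_num
        rcases main with hall | ⟨ip, im, h1, h2, h3, h4⟩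
        · left
          intro i
          rw [key i, hall (σ i), mul_zero]
        · rcases hεcases with hε | hε
          · right
            refine ⟨σ.symm ip, σ.symm im, ?_, ?_, ?_, ?_⟩
            · rw [key (σ.symm ip), hε, one_mul, Equiv.apply_symm_apply]; exact h1
            · rw [key (σ.symm im), hε, one_mul, Equiv.apply_symm_apply]; exact h2
            · intro k
              rw [key k, key (σ.symm ip), hε, one_mul, one_mul, Equiv.apply_symm_apply]
              exact h3 (σ k)
            · intro k
              rw [key k, key (σ.symm im), hε, one_mul, one_mul, Equiv.apply_symm_apply]
              exact h4 (σ k)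
          · right
            refine ⟨σ.symm im, σ.symm ip, ?_, ?_, ?_, ?_⟩
            · rw [key (σ.symm im), hε, Equiv.apply_symm_apply, neg_one_mul]; linarith
            · rw [key (σ.symm ip), hε, Equiv.apply_symm_apply, neg_one_mul]; linarith
            · intro k
              rw [key k, key (σ.symm im), hε, Equiv.apply_symm_apply, neg_one_mul,
                neg_one_mul, abs_neg]
              exact h4 (σ k)
            · intro k
              rw [key k, key (σ.symm ip), hε, Equiv.apply_symm_apply, neg_one_mul,
                neg_one_mul, abs_neg, neg_neg]
              exact h3 (σ k)
      · -- X not injective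
        obtain ⟨a, b, hab, hne⟩ := Function.not_injective_iff.1 hXinj
        have hXσ : X ∘ ⇑(Equiv.swap a b) = X := by
          funext j
          rcases eq_or_ne j a with rfl | hja
          · rw [Function.comp_apply, Equiv.swap_apply_left, hab]
          rcases eq_or_ne j b with rfl | hjb
          · rw [Function.comp_apply, Equiv.swap_apply_right, ← hab]
          · rw [Function.comp_apply, Equiv.swap_apply_of_ne_of_ne hja hjb]
        have key : ∀ i, delTerm hn Φ X Y i = -delTerm hn Φ X Y (Equiv.swap a b i) := by
          intro i
          have h := delTerm_comp_perm hn hAlt (Equiv.swap a b) X Y i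
          rw [hXσ, Equiv.Perm.sign_swap hne] at h
          rw [h]
          push_cast
          ring
        by_cases h0 : delTerm hn Φ X Y a = 0
        · left
          intro i
          rcases eq_or_ne i a with rfl | hia
          · exact h0
          rcases eq_or_ne i b with rfl | hib
          · have h := key a
            rw [Equiv.swap_apply_left] at h
            linarith
          · have h := key i
            rw [Equiv.swap_apply_of_ne_of_ne hia hib] at h
            linarith
        · right
          have hb' : delTerm hn Φ X Y b = -delTerm hn Φ X Y a := by
            have h := key a
            rw [Equiv.swap_apply_left] at h
            linarith
          have hoth : ∀ i, i ≠ a → i ≠ b → delTerm hn Φ X Y i = 0 := by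
            intro i hia hib
            have h := key i
            rw [Equiv.swap_apply_of_ne_of_ne hia hib] at h
            linarith
          rcases Ne.lt_or_gt h0 with hneg | hpos
          · refine ⟨b, a, by rw [hb']; linarith, hneg, ?_, ?_⟩
            · intro k
              rw [hb']
              rcases eq_or_ne k a with rfl | hka
              · rw [abs_of_neg hneg]
              rcases eq_or_ne k b with rfl | hkb
              · rw [hb', abs_neg, abs_of_neg hneg]
              · rw [hoth k hka hkb, abs_zero]; linarith
            · intro k
              rcases eq_or_ne k a with rfl | hka
              · rw [abs_of_neg hneg]
              rcases eq_or_ne k b with rfl | hkb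
              · rw [hb', abs_neg, abs_of_neg hneg]
              · rw [hoth k hka hkb, abs_zero]; linarith
          · refine ⟨a, b, hpos, by rw [hb']; linarith, ?_, ?_⟩
            · intro k
              rcases eq_or_ne k a with rfl | hka
              · rw [abs_of_pos hpos]
              rcases eq_or_ne k b with rfl | hkb
              · rw [hb', abs_neg, abs_of_pos hpos]
              · rw [hoth k hka hkb, abs_zero]; linarith
            · intro k
              rw [hb', neg_neg]
              rcases eq_or_ne k a with rfl | hka
              · rw [abs_of_pos hpos]
              rcases eq_or_ne k b with rfl | hkb
              · rw [hb', abs_neg, abs_of_pos hpos]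
              · rw [hoth k hka hkb, abs_zero]; linarith
    · -- Y not injective
      left
      intro i
      rw [delTerm_eq]
      have hni : ¬ Function.Injective (Fin.cons (X i) Y : Fin (n + 1) → E) := by
        intro hinj
        exact hYinj (Fin.cons_injective_iff.1 hinj).2
      rw [hAlt.2 _ hni, mul_zero]
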